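/- arXiv:patt-sol/9608009 — 4 statements merged into one kernel-verified Lean document; each statement's English description precedes it below -/
import Mathlib

section
/- For all real t, (1/ρ0(t)²)·∫_{−∞}^t ρ0(s)²·(ρ0(s)² − x0²) ds = −x0, i.e. the function β1(t) defined by this expression is identically equal to −x0. -/
open Real MeasureTheory Set Filter Topology

lemma tanh_identity' (y : ℝ) : (1 + Real.tanh y) / 2 = 1 / (1 + Real.exp (-(2*y))) := by
  have ha : 0 < Real.exp y := Real.exp_pos y
  have hb : 0 < Real.exp (-y) := Real.exp_pos (-y)
  have hab : Real.exp y * Real.exp (-y) = 1 := by rw [← Real.exp_add]; simp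
  have h2 : Real.exp (-(2*y)) = Real.exp (-y) * Real.exp (-y) := by rw [← Real.exp_add]; ring_nf
  rw [Real.tanh_eq_sinh_div_cosh, Real.sinh_eq, Real.cosh_eq, h2]
  have hc : Real.exp y + Real.exp (-y) > 0 := by positivity
  field_simp
  nlinarith [hab]

theorem stmt_3 (x0 : ℝ) (hx0 : 0 < x0)
    (ρ0 : ℝ → ℝ) (hρ0 : ∀ t, ρ0 t = x0 * Real.sqrt ((1 + Real.tanh (x0 * t / 2)) / 2)) :
    ∀ t : ℝ,
      MeasureTheory.IntegrableOn
        (fun s : ℝ => (ρ0 s) ^ 2 * ((ρ0 s) ^ 2 - x0 ^ 2)) (Set.Iic t) ∧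
      (1 / (ρ0 t) ^ 2) * ∫ s in Set.Iic t, (ρ0 s) ^ 2 * ((ρ0 s) ^ 2 - x0 ^ 2) = -x0 := by
  set E : ℝ → ℝ := fun s => Real.exp (-(x0 * s)) with hE
  have hEpos : ∀ s, 0 < E s := fun s => Real.exp_pos _
  have hden : ∀ s, 0 < 1 + E s := fun s => by positivity
  have hx3 : 0 < x0 ^ 3 := by positivity
  have hsq : ∀ s, (ρ0 s) ^ 2 = x0 ^ 2 / (1 + E s) := by
    intro s
    rw [hρ0, mul_pow, Real.sq_sqrt, tanh_identity' (x0 * s / 2)]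
    · have : 2 * (x0 * s / 2) = x0 * s := by ring
      rw [this]; ring
    · rw [tanh_identity']; positivity
  have hf : ∀ s, (ρ0 s) ^ 2 * ((ρ0 s) ^ 2 - x0 ^ 2)
      = -x0 ^ 4 * (E s / (1 + E s) ^ 2) := by
    intro s
    rw [hsq s]
    have := (hden s).ne'
    field_simp
    ring
  set g : ℝ → ℝ := fun s => -x0 ^ 3 / (1 + E s) with hg
  have hderiv : ∀ s, HasDerivAt g ((ρ0 s) ^ 2 * ((ρ0 s) ^ 2 - x0 ^ 2)) s := by
    intro s
    have h1 : HasDerivAt (fun s => -(x0 * s)) (-x0) s := by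
      exact (((hasDerivAt_id s).const_mul x0).neg).congr_deriv (by ring)
    have h2 : HasDerivAt E (-x0 * E s) s := by
      refine ((Real.hasDerivAt_exp (-(x0 * s))).comp s h1).congr_deriv ?_
      simp only [hE]; ring
    have h3 : HasDerivAt (fun s => 1 + E s) (-x0 * E s) s := h2.const_add 1
    have h4 : HasDerivAt (fun s => (1 + E s)⁻¹) (-(-x0 * E s) / (1 + E s) ^ 2) s :=
      h3.inv (hden s).ne'
    have h5 := h4.const_mul (-x0 ^ 3)
    have heq : -x0 ^ 3 * (-(-x0 * E s) / (1 + E s) ^ 2)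
        = (ρ0 s) ^ 2 * ((ρ0 s) ^ 2 - x0 ^ 2) := by
      rw [hf s]; field_simp
    have hfun : (fun s => -x0 ^ 3 * (1 + E s)⁻¹) = g := by
      funext u; rw [hg]; field_simp
    rw [← heq, ← hfun]
    exact h5
  have hlim : Tendsto g atBot (𝓝 0) := by
    have h1 : Tendsto (fun s : ℝ => -(x0 * s)) atBot atTop := by
      apply tendsto_neg_atBot_atTop.comp
      exact (tendsto_const_mul_atBot_of_pos hx0).mpr tendsto_id
    have h2 : Tendsto (fun s => 1 + E s) atBot atTop :=
      tendsto_atTop_add_const_left _ 1 (Real.tendsto_exp_atTop.comp h1)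
    have h3 : Tendsto (fun s => (1 + E s)⁻¹) atBot (𝓝 0) := h2.inv_tendsto_atTop
    have := h3.const_mul (-x0 ^ 3)
    simpa [hg, div_eq_mul_inv] using this
  have hgle : ∀ s, g s ≤ 0 := fun s =>
    div_nonpos_of_nonpos_of_nonneg (by nlinarith) (hden s).le
  have hgge : ∀ s, -x0 ^ 3 ≤ g s := by
    intro s
    rw [hg]
    simp only
    rw [le_div_iff₀ (hden s)]
    nlinarith [hEpos s]
  -- continuity of integrand
  have hcont : Continuous fun s : ℝ => (ρ0 s) ^ 2 * ((ρ0 s) ^ 2 - x0 ^ 2) := by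
    have : (fun s : ℝ => (ρ0 s) ^ 2 * ((ρ0 s) ^ 2 - x0 ^ 2))
        = fun s => -x0 ^ 4 * (E s / (1 + E s) ^ 2) := funext hf
    rw [this]
    apply Continuous.mul continuous_const
    apply Continuous.div
    · exact Real.continuous_exp.comp (continuous_const.mul continuous_id).neg
    · exact (continuous_const.add (Real.continuous_exp.comp (continuous_const.mul continuous_id).neg)).pow 2
    · intro s; exact pow_ne_zero 2 (hden s).ne'
  intro t
  have hint : MeasureTheory.IntegrableOn
      (fun s : ℝ => (ρ0 s) ^ 2 * ((ρ0 s) ^ 2 - x0 ^ 2)) (Set.Iic t) := by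
    apply integrableOn_Iic_of_intervalIntegral_norm_bounded (x0 ^ 3) t
      (f := fun s : ℝ => (ρ0 s) ^ 2 * ((ρ0 s) ^ 2 - x0 ^ 2)) (a := fun i : ℝ => i) (l := atBot)
      (fun i => (hcont.integrableOn_Ioc))
      tendsto_id
    filter_upwards [eventually_le_atBot t] with i hi
    have hle : ∀ s, (ρ0 s) ^ 2 * ((ρ0 s) ^ 2 - x0 ^ 2) ≤ 0 := by
      intro s
      rw [hf s]
      apply mul_nonpos_of_nonpos_of_nonneg
      · nlinarith
      · positivity
    have hnorm : ∀ s, ‖(ρ0 s) ^ 2 * ((ρ0 s) ^ 2 - x0 ^ 2)‖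
        = -((ρ0 s) ^ 2 * ((ρ0 s) ^ 2 - x0 ^ 2)) := fun s => by
      rw [Real.norm_eq_abs, abs_of_nonpos (hle s)]
    rw [show (fun s => ‖(ρ0 s) ^ 2 * ((ρ0 s) ^ 2 - x0 ^ 2)‖)
        = fun s => -((ρ0 s) ^ 2 * ((ρ0 s) ^ 2 - x0 ^ 2)) from funext hnorm]
    rw [intervalIntegral.integral_neg]
    rw [intervalIntegral.integral_eq_sub_of_hasDerivAt (fun s _ => hderiv s)
      (hcont.intervalIntegrable i t)]
    have := hgle i
    have := hgge t
    linarith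
  refine ⟨hint, ?_⟩
  rw [integral_Iic_of_hasDerivAt_of_tendsto' (fun s _ => hderiv s) hint hlim]
  rw [hsq t, hg]
  simp only
  rw [sub_zero]
  have h1 : x0 ^ 2 / (1 + E t) ≠ 0 := by positivity
  field_simp
  ring
  linear_combination (-1 : ℝ) * mul_inv_cancel₀ (hden t).ne'
end

section
/- For all real t, (1/ρ0(t)²)·∫_{−∞}^t ρ0(s)²·(ρ0(s)⁴ − x0⁴) ds = −(1/4)·x0³·(5 + tanh(x0·t/2)). -/
open Real MeasureTheory Set Filter Topology

lemma my_tanh_exp (x : ℝ) :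
    Real.tanh x = (Real.exp x - Real.exp (-x)) / (Real.exp x + Real.exp (-x)) := by
  rw [Real.tanh_eq_sinh_div_cosh, Real.sinh_eq, Real.cosh_eq]
  have h : (0:ℝ) < Real.exp x + Real.exp (-x) := by positivity
  field_simp

lemma my_tanh_lt_one (x : ℝ) : Real.tanh x < 1 := by
  rw [my_tanh_exp]
  rw [div_lt_one (by positivity)]
  nlinarith [Real.exp_pos (-x)]

lemma my_neg_one_lt_tanh (x : ℝ) : -1 < Real.tanh x := by
  rw [my_tanh_exp]
  rw [lt_div_iff₀ (by positivity)]
  nlinarith [Real.exp_pos x]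

lemma my_hasDerivAt_tanh (x : ℝ) :
    HasDerivAt Real.tanh (1 - Real.tanh x ^ 2) x := by
  have h := (Real.hasDerivAt_sinh x).div (Real.hasDerivAt_cosh x) (Real.cosh_pos x).ne'
  have : HasDerivAt (fun y => Real.sinh y / Real.cosh y)
      ((Real.cosh x * Real.cosh x - Real.sinh x * Real.sinh x) / Real.cosh x ^ 2) x := h
  have heq : (Real.cosh x * Real.cosh x - Real.sinh x * Real.sinh x) / Real.cosh x ^ 2
      = 1 - Real.tanh x ^ 2 := by
    rw [Real.tanh_eq_sinh_div_cosh]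
    have hc := (Real.cosh_pos x).ne'
    field_simp
  rw [heq] at this
  exact this.congr_of_eventuallyEq (by filter_upwards with y using (Real.tanh_eq_sinh_div_cosh y))

lemma my_continuous_tanh : Continuous Real.tanh := by
  have : Real.tanh = fun x => Real.sinh x / Real.cosh x := by
    funext x; exact Real.tanh_eq_sinh_div_cosh x
  rw [this]
  exact Real.continuous_sinh.div Real.continuous_cosh (fun x => (Real.cosh_pos x).ne')

lemma my_tanh_tendsto_atBot : Tendsto Real.tanh atBot (𝓝 (-1)) := by
  have hform : ∀ x : ℝ, Real.tanh x = (Real.exp (2*x) - 1) / (Real.exp (2*x) + 1) := by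
    intro x
    rw [my_tanh_exp, Real.exp_neg, two_mul, Real.exp_add]
    have h := (Real.exp_pos x).ne'
    field_simp
  have hexp : Tendsto (fun x : ℝ => Real.exp (2*x)) atBot (𝓝 0) :=
    Real.tendsto_exp_atBot.comp (tendsto_atBot_atBot.2 fun b => ⟨b/2, fun a ha => by linarith⟩)
  have : Tendsto (fun x : ℝ => (Real.exp (2*x) - 1) / (Real.exp (2*x) + 1)) atBot
      (𝓝 ((0 - 1) / (0 + 1))) :=
    ((hexp.sub_const 1).div (hexp.add_const 1) (by norm_num))
  simp only [zero_sub, zero_add, div_one] at this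
  exact this.congr (fun x => (hform x).symm)

theorem stmt_4 (x0 : ℝ) (hx0 : 0 < x0)
    (ρ0 : ℝ → ℝ) (hρ0 : ∀ t, ρ0 t = x0 * Real.sqrt ((1 + Real.tanh (x0 * t / 2)) / 2)) :
    ∀ t : ℝ,
      MeasureTheory.IntegrableOn
        (fun s : ℝ => (ρ0 s) ^ 2 * ((ρ0 s) ^ 4 - x0 ^ 4)) (Set.Iic t) ∧
      (1 / (ρ0 t) ^ 2) * ∫ s in Set.Iic t, (ρ0 s) ^ 2 * ((ρ0 s) ^ 4 - x0 ^ 4)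
        = -(1 / 4) * x0 ^ 3 * (5 + Real.tanh (x0 * t / 2)) := by
  intro t
  set u : ℝ → ℝ := fun s => Real.tanh (x0 * s / 2) with hu_def
  have hub : ∀ s, -1 < u s ∧ u s < 1 := fun s =>
    ⟨my_neg_one_lt_tanh _, my_tanh_lt_one _⟩
  have hρ2 : ∀ s, ρ0 s ^ 2 = x0 ^ 2 * ((1 + u s) / 2) := by
    intro s
    rw [hρ0 s, mul_pow, Real.sq_sqrt (by linarith [(hub s).1] : (0:ℝ) ≤ (1 + u s) / 2)]
  have hu_deriv : ∀ s, HasDerivAt u ((1 - u s ^ 2) * (x0 / 2)) s := by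
    intro s
    have hinner : HasDerivAt (fun s : ℝ => x0 * s / 2) (x0 / 2) s := by
      simpa using ((hasDerivAt_id s).const_mul x0).div_const 2
    exact (my_hasDerivAt_tanh (x0 * s / 2)).comp s hinner
  set F : ℝ → ℝ := fun s => -(x0 ^ 5 / 8) * (u s ^ 2 + 6 * u s + 5) with hF_def
  set f : ℝ → ℝ := fun s => (ρ0 s) ^ 2 * ((ρ0 s) ^ 4 - x0 ^ 4) with hf_def
  have hf_eq : ∀ s, f s = x0 ^ 6 / 8 * ((u s ^ 2 - 1) * (u s + 3)) := by
    intro s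
    have h4 : ρ0 s ^ 4 = (ρ0 s ^ 2) ^ 2 := by ring
    simp only [hf_def, h4, hρ2 s]
    ring
  have hF_deriv : ∀ s, HasDerivAt F (f s) s := by
    intro s
    have h1 := hu_deriv s
    have h2 : HasDerivAt (fun y => u y ^ 2 + 6 * u y + 5)
        (2 * u s ^ 1 * ((1 - u s ^ 2) * (x0 / 2)) + 6 * ((1 - u s ^ 2) * (x0 / 2))) s :=
      ((h1.pow 2).add (h1.const_mul 6)).add_const 5
    have h3 := h2.const_mul (-(x0 ^ 5 / 8))
    refine h3.congr_deriv ?_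
    rw [hf_eq s]; ring
  have hf_cont : Continuous f := by
    have : f = fun s => (x0 ^ 2 * ((1 + u s) / 2)) *
        ((x0 ^ 2 * ((1 + u s) / 2)) ^ 2 - x0 ^ 4) := by
      funext s
      have h4 : ρ0 s ^ 4 = (ρ0 s ^ 2) ^ 2 := by ring
      simp only [hf_def, h4, hρ2 s]
    rw [this]
    have hcu : Continuous u := my_continuous_tanh.comp (by continuity)
    continuity
  have hf_nonpos : ∀ s, f s ≤ 0 := by
    intro s
    rw [hf_eq s]
    obtain ⟨h1, h2⟩ := hub s
    have h3 : (u s ^ 2 - 1) * (u s + 3) < 0 :=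
      mul_neg_of_neg_of_pos (by nlinarith) (by linarith)
    have hx6 : (0:ℝ) < x0 ^ 6 / 8 := by positivity
    exact (mul_neg_of_pos_of_neg hx6 h3).le
  have hFt_nonpos : ∀ s, F s ≤ 0 := by
    intro s
    obtain ⟨h1, h2⟩ := hub s
    have h3 : 0 < u s ^ 2 + 6 * u s + 5 := by nlinarith
    have hx5 : -(x0 ^ 5 / 8) < 0 := by nlinarith [pow_pos hx0 5]
    exact (mul_neg_of_neg_of_pos hx5 h3).le
  have hF_tendsto : Tendsto F atBot (𝓝 0) := by
    have harg : Tendsto (fun s : ℝ => x0 * s / 2) atBot atBot := by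
      apply tendsto_atBot_atBot.2
      intro b
      refine ⟨2 * b / x0, fun a ha => ?_⟩
      have := (le_div_iff₀ hx0).mp ha
      linarith
    have hu_tendsto : Tendsto u atBot (𝓝 (-1)) := my_tanh_tendsto_atBot.comp harg
    have : Tendsto F atBot (𝓝 (-(x0 ^ 5 / 8) * ((-1 : ℝ) ^ 2 + 6 * (-1) + 5))) := by
      exact (((hu_tendsto.pow 2).add (hu_tendsto.const_mul 6)).add_const 5).const_mul _
    norm_num at this
    exact this
  -- integrability
  have hint : IntegrableOn f (Iic t) := by
    have hfi : ∀ a : ℝ, IntegrableOn f (Ioc a t) := fun a =>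
      hf_cont.integrableOn_Ioc
    apply integrableOn_Iic_of_intervalIntegral_norm_bounded (-F t) t hfi tendsto_id
    filter_upwards [eventually_le_atBot t] with a (ha : a ≤ t)
    have hii : IntervalIntegrable f volume a t := hf_cont.intervalIntegrable a t
    have h1 : ∫ x in a..t, ‖f x‖ = ∫ x in a..t, -f x := by
      apply intervalIntegral.integral_congr
      intro x _
      simp [Real.norm_eq_abs, abs_of_nonpos (hf_nonpos x)]
    have h2 : ∫ x in a..t, f x = F t - F a :=
      intervalIntegral.integral_eq_sub_of_hasDerivAt (fun x _ => hF_deriv x) hii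
    rw [h1, intervalIntegral.integral_neg, h2]
    linarith [hFt_nonpos a]
  refine ⟨hint, ?_⟩
  have hval : ∫ s in Iic t, f s = F t - 0 :=
    integral_Iic_of_hasDerivAt_of_tendsto' (fun x _ => hF_deriv x) hint hF_tendsto
  rw [show (fun s : ℝ => (ρ0 s) ^ 2 * ((ρ0 s) ^ 4 - x0 ^ 4)) = f from rfl] at *
  rw [hval, sub_zero, hρ2 t]
  have h1 : (0:ℝ) < 1 + u t := by linarith [(hub t).1]
  have hx0' : x0 ≠ 0 := hx0.ne'
  have : Real.tanh (x0 * t / 2) = u t := rfl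
  rw [this, hF_def]
  field_simp
  ring
end

section
/- With α1(t) := −2·x0²·∫_t^∞ u0(s)·β1(s) ds and β1 ≡ −x0, one has α1(T_η) = −2·x0³·ln(η/x0), where T_η is defined by ρ0(T_η) = η for 0 < η < x0. -/
open MeasureTheory Real Filter

theorem stmt_9 (x0 η Tη : ℝ) (hx0 : 0 < x0) (hη : 0 < η) (hηx0 : η < x0)
    (ρ0 : ℝ → ℝ) (hρ0 : ∀ t, ρ0 t = x0 * Real.sqrt ((1 + Real.tanh (x0 * t / 2)) / 2))
    (u0 : ℝ → ℝ) (hu0 : ∀ t, u0 t = deriv ρ0 t / ρ0 t)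
    (β1 : ℝ → ℝ) (hβ1 : ∀ t, β1 t = -x0)
    (α1 : ℝ → ℝ) (hα1 : ∀ t, α1 t = -2 * x0 ^ 2 * ∫ s in Set.Ioi t, u0 s * β1 s)
    (hTη : ρ0 Tη = η) :
    α1 Tη = -2 * x0 ^ 3 * Real.log (η / x0) := by
  set e : ℝ → ℝ := fun t => Real.exp (-(x0 * t)) with he
  have hpos : ∀ t, 0 < 1 + e t := fun t => by positivity
  -- rewrite (1+tanh)/2
  have hg : ∀ t, (1 + Real.tanh (x0 * t / 2)) / 2 = (1 + e t)⁻¹ := by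
    intro t
    set a := Real.exp (x0 * t / 2) with haa
    have hA : 0 < a := Real.exp_pos _
    have ha : Real.exp (-(x0 * t / 2)) = a⁻¹ := by rw [Real.exp_neg]
    have hb : e t = (a * a)⁻¹ := by
      rw [he]; simp only []
      rw [Real.exp_neg, ← Real.exp_add]
      ring_nf
    rw [Real.tanh_eq_sinh_div_cosh, Real.sinh_eq, Real.cosh_eq, ha, hb]
    have h1 : a + a⁻¹ > 0 := by positivity
    field_simp
    ring
  set f : ℝ → ℝ := fun t => Real.log x0 - Real.log (1 + e t) / 2 with hf
  set f' : ℝ → ℝ := fun t => x0 * e t / (2 * (1 + e t)) with hf'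
  have hρexp : ∀ t, ρ0 t = Real.exp (f t) := by
    intro t
    rw [hρ0, hg t, Real.sqrt_eq_rpow, Real.rpow_def_of_pos (by positivity), hf]
    simp only []
    rw [Real.log_inv, Real.exp_sub, Real.exp_log hx0]
    ring_nf
    rw [← Real.exp_neg]
    congr 1
    ring
  have hρpos : ∀ t, 0 < ρ0 t := fun t => by rw [hρexp]; exact Real.exp_pos _
  have hflog : ∀ t, f t = Real.log (ρ0 t) := by
    intro t; rw [hρexp, Real.log_exp]
  have hde : ∀ t, HasDerivAt e (-x0 * e t) t := by
    intro t
    have h1 : HasDerivAt (fun t : ℝ => -(x0 * t)) (-x0) t := by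
      simpa using ((hasDerivAt_id t).const_mul x0).fun_neg
    have h2 := h1.exp
    simp only [he]
    convert h2 using 1
    ring
  have hdf : ∀ t, HasDerivAt f (f' t) t := by
    intro t
    have h1 : HasDerivAt (fun t => 1 + e t) (-x0 * e t) t := (hde t).const_add 1
    have h2 : HasDerivAt (fun t => Real.log (1 + e t)) (-x0 * e t / (1 + e t)) t :=
      h1.log (hpos t).ne'
    have h3 := (h2.div_const 2).const_sub (Real.log x0)
    refine h3.congr_deriv ?_
    rw [hf']
    field_simp
  have hdρ : ∀ t, HasDerivAt ρ0 (ρ0 t * f' t) t := by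
    intro t
    have h : ρ0 = fun t => Real.exp (f t) := funext hρexp
    rw [h]
    simpa using (hdf t).exp
  have hu0' : ∀ t, u0 t = f' t := by
    intro t
    rw [hu0, (hdρ t).deriv]
    field_simp [(hρpos t).ne']
  have hnonneg : ∀ t, 0 ≤ f' t := by
    intro t
    have := hpos t
    have : 0 < e t := Real.exp_pos _
    positivity
  have htend : Tendsto f atTop (nhds (Real.log x0)) := by
    have h0 : Tendsto e atTop (nhds 0) := by
      have h1 : Tendsto (fun t : ℝ => x0 * t) atTop atTop := by
        simpa using tendsto_id.const_mul_atTop hx0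
      have h2 : Tendsto (fun t : ℝ => -(x0 * t)) atTop atBot :=
        tendsto_neg_atTop_atBot.comp h1
      exact Real.tendsto_exp_atBot.comp h2
    have h1 : Tendsto (fun t => Real.log (1 + e t)) atTop (nhds (Real.log 1)) :=
      (Real.continuousAt_log (by norm_num)).tendsto.comp (by simpa using tendsto_const_nhds.add h0)
    rw [Real.log_one] at h1
    have h2 : Tendsto (fun t => Real.log x0 - Real.log (1 + e t) / 2) atTop
        (nhds (Real.log x0 - 0 / 2)) :=
      Tendsto.sub tendsto_const_nhds (h1.div_const 2)
    simpa using h2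
  have hint : ∫ s in Set.Ioi Tη, f' s = Real.log x0 - f Tη :=
    MeasureTheory.integral_Ioi_of_hasDerivAt_of_nonneg' (fun x _ => hdf x)
      (fun x _ => hnonneg x) htend
  have hfTη : f Tη = Real.log η := by rw [hflog, hTη]
  rw [hα1]
  have : (∫ s in Set.Ioi Tη, u0 s * β1 s) = -x0 * (Real.log x0 - Real.log η) := by
    have : (fun s => u0 s * β1 s) = fun s => -x0 * f' s := by
      funext s; rw [hu0', hβ1]; ring
    rw [this, MeasureTheory.integral_const_mul, hint, hfTη]
  rw [this, Real.log_div hη.ne' hx0.ne']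
  ring
end

section
/- With α2(t) := −2·x0²·∫_t^∞ u0(s)·β2(s) ds and β2(t) = −(1/4)·x0³·(5 + tanh(x0·t/2)), one has α2(T_η) = −2·x0⁵·ln(η/x0) + (1/2)·x0⁵·(1 − η²/x0²), where ρ0(T_η) = η for 0 < η < x0. -/
open Real Filter MeasureTheory Topology

lemma aux_tanh_exp (y : ℝ) :
    Real.tanh y = (1 - Real.exp (-(2 * y))) / (1 + Real.exp (-(2 * y))) := by
  have h1 : Real.exp y ≠ 0 := (Real.exp_pos y).ne'
  rw [Real.tanh_eq_sinh_div_cosh, Real.sinh_eq, Real.cosh_eq,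
    show -(2 * y) = -y + -y by ring, Real.exp_add, Real.exp_neg]
  have h3 : (0:ℝ) < Real.exp y + (Real.exp y)⁻¹ := by positivity
  field_simp

lemma aux_cosh_exp (y : ℝ) :
    Real.cosh y = Real.exp y * ((1 + Real.exp (-(2 * y))) / 2) := by
  have h1 : Real.exp y ≠ 0 := (Real.exp_pos y).ne'
  rw [Real.cosh_eq, show -(2 * y) = -y + -y by ring, Real.exp_add, Real.exp_neg]
  field_simp

lemma aux_tanh_lt_one (y : ℝ) : Real.tanh y < 1 := by
  rw [Real.tanh_eq_sinh_div_cosh, div_lt_one (Real.cosh_pos y)]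
  have := Real.cosh_sub_sinh y
  have := Real.exp_pos (-y)
  linarith

lemma aux_neg_one_lt_tanh (y : ℝ) : -1 < Real.tanh y := by
  rw [Real.tanh_eq_sinh_div_cosh, lt_div_iff₀ (Real.cosh_pos y)]
  have := Real.cosh_add_sinh y
  have := Real.exp_pos y
  linarith

lemma aux_hasDerivAt_tanh (y : ℝ) :
    HasDerivAt Real.tanh (1 - Real.tanh y ^ 2) y := by
  have hc : Real.cosh y ≠ 0 := (Real.cosh_pos y).ne'
  have h := (Real.hasDerivAt_sinh y).div (Real.hasDerivAt_cosh y) hc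
  have hfun : Real.tanh = fun x => Real.sinh x / Real.cosh x :=
    funext fun x => Real.tanh_eq_sinh_div_cosh x
  rw [show (Real.sinh / Real.cosh) = Real.tanh from hfun.symm] at h
  refine HasDerivAt.congr_deriv h ?_
  rw [Real.tanh_eq_sinh_div_cosh]
  have hs := Real.cosh_sq_sub_sinh_sq y
  field_simp

lemma aux_cosh_sq (y : ℝ) :
    Real.cosh y ^ 2 * (1 - Real.tanh y ^ 2) = 1 := by
  have hc : Real.cosh y ≠ 0 := (Real.cosh_pos y).ne'
  have hs := Real.cosh_sq_sub_sinh_sq y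
  rw [Real.tanh_eq_sinh_div_cosh]
  field_simp
  linarith [hs]

set_option maxHeartbeats 1000000 in
theorem stmt_10 (x0 η Tη : ℝ) (hx0 : 0 < x0) (hη : 0 < η) (hηx0 : η < x0)
    (ρ0 : ℝ → ℝ) (hρ0 : ∀ t, ρ0 t = x0 * Real.sqrt ((1 + Real.tanh (x0 * t / 2)) / 2))
    (u0 : ℝ → ℝ) (hu0 : ∀ t, u0 t = deriv ρ0 t / ρ0 t)
    (β2 : ℝ → ℝ) (hβ2 : ∀ t, β2 t = -(1 / 4) * x0 ^ 3 * (5 + Real.tanh (x0 * t / 2)))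
    (α2 : ℝ → ℝ) (hα2 : ∀ t, α2 t = -2 * x0 ^ 2 * ∫ s in Set.Ioi t, u0 s * β2 s)
    (hTη : ρ0 Tη = η) :
    α2 Tη = -2 * x0 ^ 5 * Real.log (η / x0) + (1 / 2) * x0 ^ 5 * (1 - η ^ 2 / x0 ^ 2) := by
  have hx0' : x0 ≠ 0 := hx0.ne'
  set g : ℝ → ℝ := fun s => -(x0 ^ 4 / 16) *
    (4 * s - (8 / x0) * Real.log (Real.cosh (x0 * s / 2))
      + (2 / x0) * Real.tanh (x0 * s / 2)) with hg
  set g' : ℝ → ℝ := fun s => -(x0 ^ 4 / 16) *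
    ((1 - Real.tanh (x0 * s / 2)) * (5 + Real.tanh (x0 * s / 2))) with hg'
  have hρ0fun : ρ0 = fun t => x0 * Real.sqrt ((1 + Real.tanh (x0 * t / 2)) / 2) :=
    funext hρ0
  have hinner_pos : ∀ s : ℝ, (0:ℝ) < (1 + Real.tanh (x0 * s / 2)) / 2 := by
    intro s
    have := aux_neg_one_lt_tanh (x0 * s / 2)
    linarith
  have hlin : ∀ s : ℝ, HasDerivAt (fun t : ℝ => x0 * t / 2) (x0 / 2) s := by
    intro s
    simpa using ((hasDerivAt_id s).const_mul x0).div_const 2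
  have htau : ∀ s : ℝ, HasDerivAt (fun t => Real.tanh (x0 * t / 2))
      ((1 - Real.tanh (x0 * s / 2) ^ 2) * (x0 / 2)) s := by
    intro s
    exact (aux_hasDerivAt_tanh (x0 * s / 2)).comp s (hlin s)
  have hu0' : ∀ s : ℝ, u0 s = x0 / 4 * (1 - Real.tanh (x0 * s / 2)) := by
    intro s
    have hGpos := hinner_pos s
    have hG : HasDerivAt (fun t => (1 + Real.tanh (x0 * t / 2)) / 2)
        ((1 - Real.tanh (x0 * s / 2) ^ 2) * (x0 / 2) / 2) s :=
      ((htau s).const_add 1).div_const 2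
    have hsq : HasDerivAt (fun t => Real.sqrt ((1 + Real.tanh (x0 * t / 2)) / 2))
        (1 / (2 * Real.sqrt ((1 + Real.tanh (x0 * s / 2)) / 2))
          * ((1 - Real.tanh (x0 * s / 2) ^ 2) * (x0 / 2) / 2)) s :=
      (Real.hasDerivAt_sqrt hGpos.ne').comp s hG
    have hρ : HasDerivAt ρ0
        (x0 * (1 / (2 * Real.sqrt ((1 + Real.tanh (x0 * s / 2)) / 2))
          * ((1 - Real.tanh (x0 * s / 2) ^ 2) * (x0 / 2) / 2))) s := by
      rw [hρ0fun]; exact hsq.const_mul x0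
    rw [hu0 s, hρ.deriv, hρ0 s]
    set S := Real.sqrt ((1 + Real.tanh (x0 * s / 2)) / 2) with hS
    set τ := Real.tanh (x0 * s / 2) with hτdef
    have hSpos : 0 < S := Real.sqrt_pos.2 hGpos
    have hS2 : S ^ 2 = (1 + τ) / 2 := Real.sq_sqrt hGpos.le
    have key : x0 * (1 / (2 * S) * ((1 - τ ^ 2) * (x0 / 2) / 2))
        = (x0 / 4 * (1 - τ)) * (x0 * S) := by
      have hSne : S ≠ 0 := hSpos.ne'
      field_simp
      linear_combination (-(8:ℝ) * (1 - τ)) * hS2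
    rw [key]
    exact mul_div_cancel_right₀ _ (by positivity)
  have hint : ∀ s : ℝ, u0 s * β2 s = g' s := by
    intro s
    rw [hu0' s, hβ2 s]
    show _ = -(x0 ^ 4 / 16) *
      ((1 - Real.tanh (x0 * s / 2)) * (5 + Real.tanh (x0 * s / 2)))
    ring
  have hderiv : ∀ s : ℝ, HasDerivAt g (g' s) s := by
    intro s
    have hcoshpos := Real.cosh_pos (x0 * s / 2)
    have hcosh : HasDerivAt (fun t => Real.cosh (x0 * t / 2))
        (Real.sinh (x0 * s / 2) * (x0 / 2)) s :=
      by exact (Real.hasDerivAt_cosh (x0 * s / 2)).comp s (hlin s)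
    have hlog : HasDerivAt (fun t => Real.log (Real.cosh (x0 * t / 2)))
        ((Real.cosh (x0 * s / 2))⁻¹ * (Real.sinh (x0 * s / 2) * (x0 / 2))) s :=
      by exact (Real.hasDerivAt_log hcoshpos.ne').comp s hcosh
    have h4 : HasDerivAt (fun t : ℝ => 4 * t) 4 s := by
      simpa using (hasDerivAt_id s).const_mul (4:ℝ)
    have hF : HasDerivAt
        (fun t => 4 * t - (8 / x0) * Real.log (Real.cosh (x0 * t / 2))
          + (2 / x0) * Real.tanh (x0 * t / 2))
        (4 - (8 / x0) * ((Real.cosh (x0 * s / 2))⁻¹ * (Real.sinh (x0 * s / 2) * (x0 / 2)))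
          + (2 / x0) * ((1 - Real.tanh (x0 * s / 2) ^ 2) * (x0 / 2))) s :=
      (h4.sub (hlog.const_mul (8 / x0))).add ((htau s).const_mul (2 / x0))
    have hF' := hF.const_mul (-(x0 ^ 4 / 16))
    have hval : -(x0 ^ 4 / 16) *
        (4 - (8 / x0) * ((Real.cosh (x0 * s / 2))⁻¹ * (Real.sinh (x0 * s / 2) * (x0 / 2)))
          + (2 / x0) * ((1 - Real.tanh (x0 * s / 2) ^ 2) * (x0 / 2))) = g' s := by
      have htanh_eq : (Real.cosh (x0 * s / 2))⁻¹ * Real.sinh (x0 * s / 2)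
          = Real.tanh (x0 * s / 2) := by
        rw [Real.tanh_eq_sinh_div_cosh]; field_simp
      show _ = -(x0 ^ 4 / 16) *
        ((1 - Real.tanh (x0 * s / 2)) * (5 + Real.tanh (x0 * s / 2)))
      rw [show (Real.cosh (x0 * s / 2))⁻¹ * (Real.sinh (x0 * s / 2) * (x0 / 2))
          = ((Real.cosh (x0 * s / 2))⁻¹ * Real.sinh (x0 * s / 2)) * (x0 / 2) by ring,
        htanh_eq]
      field_simp
      ring
    rw [← hval]
    exact hF'
  have hnonpos : ∀ s ∈ Set.Ioi Tη, g' s ≤ 0 := by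
    intro s _
    have h1 := aux_tanh_lt_one (x0 * s / 2)
    have h2 := aux_neg_one_lt_tanh (x0 * s / 2)
    show -(x0 ^ 4 / 16) *
      ((1 - Real.tanh (x0 * s / 2)) * (5 + Real.tanh (x0 * s / 2))) ≤ 0
    have hpos : (0:ℝ) < x0 ^ 4 / 16 := by positivity
    have hA : (0:ℝ) < 1 - Real.tanh (x0 * s / 2) := by linarith
    have hB : (0:ℝ) < 5 + Real.tanh (x0 * s / 2) := by linarith
    nlinarith [mul_pos (mul_pos hpos hA) hB]
  set l : ℝ := -(x0 ^ 4 / 16) * ((8 / x0) * Real.log 2 + 2 / x0) with hl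
  have hgl : Tendsto g atTop (𝓝 l) := by
    have hgeq : ∀ s : ℝ, g s = -(x0 ^ 4 / 16) *
        ((8 / x0) * (Real.log 2 - Real.log (1 + Real.exp (-(x0 * s))))
          + (2 / x0) * ((1 - Real.exp (-(x0 * s))) / (1 + Real.exp (-(x0 * s))))) := by
      intro s
      have he : -(2 * (x0 * s / 2)) = -(x0 * s) := by ring
      have hc := aux_cosh_exp (x0 * s / 2)
      rw [he] at hc
      have hpos : (0:ℝ) < 1 + Real.exp (-(x0 * s)) := by positivity
      have hlogc : Real.log (Real.cosh (x0 * s / 2))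
          = x0 * s / 2 + (Real.log (1 + Real.exp (-(x0 * s))) - Real.log 2) := by
        rw [hc, Real.log_mul (Real.exp_pos _).ne' (by positivity), Real.log_exp,
          Real.log_div hpos.ne' two_ne_zero]
      have ht := aux_tanh_exp (x0 * s / 2)
      rw [he] at ht
      show -(x0 ^ 4 / 16) *
        (4 * s - (8 / x0) * Real.log (Real.cosh (x0 * s / 2))
          + (2 / x0) * Real.tanh (x0 * s / 2)) = _
      rw [hlogc, ht]
      field_simp
      ring
    rw [funext hgeq]
    have hexp : Tendsto (fun s : ℝ => Real.exp (-(x0 * s))) atTop (𝓝 0) := by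
      apply Real.tendsto_exp_atBot.comp
      apply tendsto_neg_atTop_atBot.comp
      exact (tendsto_const_mul_atTop_of_pos hx0).2 tendsto_id
    have hlog1 : Tendsto (fun s : ℝ => Real.log (1 + Real.exp (-(x0 * s))))
        atTop (𝓝 0) := by
      have := (tendsto_const_nhds.add hexp).log (by norm_num : (1:ℝ) + 0 ≠ 0)
      simpa using this
    have htanh1 : Tendsto (fun s : ℝ =>
        (1 - Real.exp (-(x0 * s))) / (1 + Real.exp (-(x0 * s)))) atTop (𝓝 1) := by
      have hnum : Tendsto (fun s : ℝ => 1 - Real.exp (-(x0 * s))) atTop (𝓝 (1 - 0)) :=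
        tendsto_const_nhds.sub hexp
      have hden : Tendsto (fun s : ℝ => 1 + Real.exp (-(x0 * s))) atTop (𝓝 (1 + 0)) :=
        tendsto_const_nhds.add hexp
      have := hnum.div hden (by norm_num)
      simp at this; exact this
    have hmain : Tendsto (fun s : ℝ =>
        -(x0 ^ 4 / 16) * ((8 / x0) * (Real.log 2 - Real.log (1 + Real.exp (-(x0 * s))))
          + (2 / x0) * ((1 - Real.exp (-(x0 * s))) / (1 + Real.exp (-(x0 * s))))))
        atTop (𝓝 (-(x0 ^ 4 / 16) * ((8 / x0) * (Real.log 2 - 0) + (2 / x0) * 1))) :=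
      (((tendsto_const_nhds.sub hlog1).const_mul _).add
        (htanh1.const_mul _)).const_mul _
    have : -(x0 ^ 4 / 16) * ((8 / x0) * (Real.log 2 - 0) + (2 / x0) * 1) = l := by
      rw [hl]; ring
    rwa [this] at hmain
  have hFTC : ∫ s in Set.Ioi Tη, u0 s * β2 s = l - g Tη := by
    have : ∀ s ∈ Set.Ioi Tη, u0 s * β2 s = g' s := fun s _ => hint s
    rw [MeasureTheory.setIntegral_congr_fun measurableSet_Ioi this]
    exact MeasureTheory.integral_Ioi_of_hasDerivAt_of_nonpos'
      (fun x _ => hderiv x) hnonpos hgl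
  set τ := Real.tanh (x0 * Tη / 2) with hτdef
  have h1τ : -1 < τ := aux_neg_one_lt_tanh _
  have h2τ : τ < 1 := aux_tanh_lt_one _
  have hτval : (1 + τ) / 2 = (η / x0) ^ 2 := by
    have h := hTη
    rw [hρ0 Tη] at h
    have hsq : Real.sqrt ((1 + τ) / 2) = η / x0 := by
      rw [eq_comm, div_eq_iff hx0', mul_comm]; exact h.symm
    have h2 := Real.sq_sqrt (hinner_pos Tη).le
    rw [show Real.sqrt ((1 + Real.tanh (x0 * Tη / 2)) / 2)
        = Real.sqrt ((1 + τ) / 2) from rfl, hsq] at h2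
    exact h2.symm
  have hηx0pos : (0:ℝ) < η / x0 := div_pos hη hx0
  have hηx0lt : η / x0 < 1 := (div_lt_one hx0).2 hηx0
  have h1ppos : (0:ℝ) < 1 + τ := by linarith
  have h1mpos : (0:ℝ) < 1 - τ := by nlinarith [hτval]
  have hlogcosh : 2 * Real.log (Real.cosh (x0 * Tη / 2))
      = -(Real.log (1 - τ) + Real.log (1 + τ)) := by
    have hc := aux_cosh_sq (x0 * Tη / 2)
    rw [← hτdef] at hc
    have hτsq : (0:ℝ) < 1 - τ ^ 2 := by nlinarith
    have hcosh2 : Real.cosh (x0 * Tη / 2) ^ 2 = ((1 - τ) * (1 + τ))⁻¹ := by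
      rw [show (1 - τ) * (1 + τ) = 1 - τ ^ 2 by ring]
      field_simp
      linear_combination hc
    calc 2 * Real.log (Real.cosh (x0 * Tη / 2))
        = Real.log (Real.cosh (x0 * Tη / 2) ^ 2) := by
          rw [Real.log_pow]; norm_num
      _ = -(Real.log (1 - τ) + Real.log (1 + τ)) := by
          rw [hcosh2, Real.log_inv, Real.log_mul h1mpos.ne' h1ppos.ne']
  have hTval : x0 * Tη = Real.log (1 + τ) - Real.log (1 - τ) := by
    have ht := aux_tanh_exp (x0 * Tη / 2)
    rw [show -(2 * (x0 * Tη / 2)) = -(x0 * Tη) by ring, ← hτdef] at ht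
    have hd : (0:ℝ) < 1 + Real.exp (-(x0 * Tη)) := by positivity
    have hexpval : Real.exp (-(x0 * Tη)) = (1 - τ) / (1 + τ) := by
      rw [eq_div_iff h1ppos.ne']
      rw [eq_div_iff hd.ne'] at ht
      linear_combination ht
    have hle := Real.log_exp (-(x0 * Tη))
    rw [hexpval, Real.log_div h1mpos.ne' h1ppos.ne'] at hle
    linarith
  have hgT : g Tη = -(x0 ^ 4 / 16) * ((8 / x0) * Real.log (1 + τ) + (2 / x0) * τ) := by
    have h1 : 4 * Tη = (4 / x0) * (Real.log (1 + τ) - Real.log (1 - τ)) := by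
      rw [← hTval]; field_simp
    have h2 : (8 / x0) * Real.log (Real.cosh (x0 * Tη / 2))
        = (4 / x0) * -(Real.log (1 - τ) + Real.log (1 + τ)) := by
      rw [← hlogcosh]; ring
    show -(x0 ^ 4 / 16) * (4 * Tη - (8 / x0) * Real.log (Real.cosh (x0 * Tη / 2))
        + (2 / x0) * τ) = _
    rw [h1, h2]
    ring
  have hlog1τ : Real.log (1 + τ) = Real.log 2 + 2 * Real.log (η / x0) := by
    have h2 : 1 + τ = 2 * (η / x0) ^ 2 := by linarith [hτval]
    rw [h2, Real.log_mul two_ne_zero (by positivity), Real.log_pow]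
    norm_num
  have hτeta : τ = 2 * (η ^ 2 / x0 ^ 2) - 1 := by
    have h3 : (η / x0) ^ 2 = η ^ 2 / x0 ^ 2 := by ring
    rw [h3] at hτval
    linarith [hτval]
  rw [hα2, hFTC, hgT, hlog1τ, hτeta, hl]
  field_simp
  ring
end
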